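/- With the setup of the previous determinant formula for the network {A+B → P, B+C → Q, C → 2A} with unit outflows and mass-action kinetics: if the rate constant k_3 = k_{C→2A} satisfies 0 < k_3 ≤ 1, then det(∂r/∂c)(c) < 0 for every c in the open positive orthant ℝ⁵_{>0}. -/

import Mathlib

set_option maxHeartbeats 4000000 in
theorem stmt_18 (k1 k2 k3 iA iB iC iP iQ : ℝ)
    (hk1 : 0 < k1) (hk2 : 0 < k2) (hk3 : 0 < k3) (hk3le : k3 ≤ 1)
    (hiA : 0 < iA) (hiB : 0 < iB) (hiC : 0 < iC) (hiP : 0 < iP) (hiQ : 0 < iQ)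
    (c : Fin 5 → ℝ) (hc : ∀ i, 0 < c i) :
    (Matrix.of fun i j : Fin 5 =>
      fderiv ℝ (fun x : Fin 5 → ℝ =>
        (![iA - x 0 - k1 * x 0 * x 1 + 2 * k3 * x 2,
           iB - x 1 - k1 * x 0 * x 1 - k2 * x 1 * x 2,
           iC - x 2 - k2 * x 1 * x 2 - k3 * x 2,
           iP - x 3 + k1 * x 0 * x 1,
           iQ - x 4 + k2 * x 1 * x 2] : Fin 5 → ℝ) i) c
        (Pi.single j (1 : ℝ))).det < 0 := by
  set P : Fin 5 → ((Fin 5 → ℝ) →L[ℝ] ℝ) := fun i => ContinuousLinearMap.proj i with hP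
  have hp : ∀ i : Fin 5, HasFDerivAt (fun x : Fin 5 → ℝ => x i) (P i) c :=
    fun i => hasFDerivAt_apply i c
  set a := c 0 with hA; set b := c 1 with hB; set cc := c 2 with hC
  set L : Fin 5 → ((Fin 5 → ℝ) →L[ℝ] ℝ) :=
    ![(-1 - k1*b) • P 0 + (-(k1*a)) • P 1 + (2*k3) • P 2,
      (-(k1*b)) • P 0 + (-1 - k1*a - k2*cc) • P 1 + (-(k2*b)) • P 2,
      (-(k2*cc)) • P 1 + (-1 - k2*b - k3) • P 2,
      (k1*b) • P 0 + (k1*a) • P 1 + (-1 : ℝ) • P 3,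
      (k2*cc) • P 1 + (k2*b) • P 2 + (-1 : ℝ) • P 4] with hL
  have HΦ : HasFDerivAt (fun (x : Fin 5 → ℝ) (i : Fin 5) =>
      (![iA - x 0 - k1 * x 0 * x 1 + 2 * k3 * x 2,
         iB - x 1 - k1 * x 0 * x 1 - k2 * x 1 * x 2,
         iC - x 2 - k2 * x 1 * x 2 - k3 * x 2,
         iP - x 3 + k1 * x 0 * x 1,
         iQ - x 4 + k2 * x 1 * x 2] : Fin 5 → ℝ) i)
      (ContinuousLinearMap.pi L) c := by
    rw [hasFDerivAt_pi]
    intro i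
    fin_cases i
    · have := (((hasFDerivAt_const iA c).sub (hp 0)).sub (((hp 0).const_mul k1).mul (hp 1))).add
        ((hp 2).const_mul (2*k3))
      convert this using 1 <;> ext v <;> simp [hL, hP] <;> ring
    · have := (((hasFDerivAt_const iB c).sub (hp 1)).sub (((hp 0).const_mul k1).mul (hp 1))).sub
        (((hp 1).const_mul k2).mul (hp 2))
      convert this using 1 <;> ext v <;> simp [hL, hP] <;> ring
    · have := (((hasFDerivAt_const iC c).sub (hp 2)).sub (((hp 1).const_mul k2).mul (hp 2))).sub
        ((hp 2).const_mul k3)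
      convert this using 1 <;> ext v <;> simp [hL, hP] <;> ring
    · have := ((hasFDerivAt_const iP c).sub (hp 3)).add (((hp 0).const_mul k1).mul (hp 1))
      convert this using 1 <;> ext v <;> simp [hL, hP] <;> ring
    · have := ((hasFDerivAt_const iQ c).sub (hp 4)).add (((hp 1).const_mul k2).mul (hp 2))
      convert this using 1 <;> ext v <;> simp [hL, hP] <;> ring
  have hrow : ∀ i : Fin 5, fderiv ℝ (fun x : Fin 5 → ℝ =>
      (![iA - x 0 - k1 * x 0 * x 1 + 2 * k3 * x 2,
         iB - x 1 - k1 * x 0 * x 1 - k2 * x 1 * x 2,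
         iC - x 2 - k2 * x 1 * x 2 - k3 * x 2,
         iP - x 3 + k1 * x 0 * x 1,
         iQ - x 4 + k2 * x 1 * x 2] : Fin 5 → ℝ) i) c
      = (P i).comp (ContinuousLinearMap.pi L) := by
    intro i
    exact (hasFDerivAt_pi'.1 HΦ i).fderiv
  have hM : (Matrix.of fun i j : Fin 5 =>
      fderiv ℝ (fun x : Fin 5 → ℝ =>
        (![iA - x 0 - k1 * x 0 * x 1 + 2 * k3 * x 2,
           iB - x 1 - k1 * x 0 * x 1 - k2 * x 1 * x 2,
           iC - x 2 - k2 * x 1 * x 2 - k3 * x 2,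
           iP - x 3 + k1 * x 0 * x 1,
           iQ - x 4 + k2 * x 1 * x 2] : Fin 5 → ℝ) i) c
        (Pi.single j (1 : ℝ)))
      = !![-1 - k1*b, -(k1*a), 2*k3, 0, 0;
           -(k1*b), -1 - k1*a - k2*cc, -(k2*b), 0, 0;
           0, -(k2*cc), -1 - k2*b - k3, 0, 0;
           k1*b, k1*a, 0, -1, 0;
           0, k2*cc, k2*b, 0, -1] := by
    ext i j
    rw [Matrix.of_apply, hrow i]
    rw [ContinuousLinearMap.comp_apply]
    simp only [hP, ContinuousLinearMap.proj_apply, ContinuousLinearMap.pi_apply]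
    fin_cases i <;> fin_cases j <;>
      simp only [hL, Matrix.cons_val_zero, Matrix.cons_val_one, Matrix.head_cons,
        Fin.zero_eta, Fin.mk_one, Fin.isValue, Matrix.cons_val_two, Matrix.tail_cons,
        Matrix.cons_val_three, Matrix.cons_val_four, ContinuousLinearMap.add_apply,
        ContinuousLinearMap.smul_apply, ContinuousLinearMap.proj_apply, smul_eq_mul,
        Pi.single_apply, Matrix.cons_val', Matrix.cons_val_fin_one, Matrix.empty_val',
        Matrix.head_fin_const, Matrix.of_apply] <;>
      norm_num [hP, ContinuousLinearMap.proj_apply, Pi.single_apply, Fin.ext_iff] <;>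
      (try decide)
  rw [hM]
  have hdet : (!![-1 - k1*b, -(k1*a), 2*k3, 0, 0;
           -(k1*b), -1 - k1*a - k2*cc, -(k2*b), 0, 0;
           0, -(k2*cc), -1 - k2*b - k3, 0, 0;
           k1*b, k1*a, 0, -1, 0;
           0, k2*cc, k2*b, 0, -1] : Matrix (Fin 5) (Fin 5) ℝ).det
      = -(1 + k1*a + k2*cc + k2*b + k1*k2*(a*b) + k3 + k1*k3*a + k2*k3*cc
          + k1*b + k1*k3*b + k1*k2*(b*b)) + (k3-1)*k1*k2*(b*cc) := by
    simp [Matrix.det_succ_row_zero, Fin.sum_univ_succ, Fin.succAbove]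
    ring
  rw [hdet]
  have ha := hc 0; have hb := hc 1; have hcc := hc 2
  rw [← hA] at ha; rw [← hB] at hb; rw [← hC] at hcc
  nlinarith [mul_pos hk1 ha, mul_pos hk2 hcc, mul_pos hk2 hb, mul_pos hk1 hb,
    mul_pos (mul_pos hk1 hk2) (mul_pos ha hb),
    mul_pos (mul_pos hk1 hk3) ha, mul_pos (mul_pos hk2 hk3) hcc,
    mul_pos (mul_pos hk1 hk3) hb, mul_pos (mul_pos hk1 hk2) (mul_pos hb hb),
    mul_nonneg (mul_nonneg (mul_nonneg (sub_nonneg.2 hk3le) hk1.le) hk2.le)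
      (mul_pos hb hcc).le]
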